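/- A necklace graph has a star cutset if and only if it has a short bead. -/

import Mathlib

namespace BurlingFormal

open SimpleGraph

/-- An orientation of a simple graph, given as a relation choosing a direction for each edge. -/
def IsOrientation {V : Type} (G : SimpleGraph V) (A : V → V → Prop) : Prop :=
  (∀ u v, A u v → G.Adj u v) ∧ (∀ u v, G.Adj u v → (A u v ↔ ¬ A v u))

/-- A chordless cycle: a cycle such that every adjacency between its vertices is a cycle edge. -/
def IsChordlessCycle {V : Type} (G : SimpleGraph V) {v : V} (c : G.Walk v v) : Prop :=
  c.IsCycle ∧ ∀ x y, x ∈ c.support → y ∈ c.support → G.Adj x y → s(x, y) ∈ c.edges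

/-- A hole: a chordless cycle of length at least 4. -/
def IsHole {V : Type} (G : SimpleGraph V) {v : V} (c : G.Walk v v) : Prop :=
  IsChordlessCycle G c ∧ 4 ≤ c.length

/-- A source of a hole w.r.t. an orientation: both its neighbours on the hole are out-neighbours. -/
def IsHoleSource {V : Type} {G : SimpleGraph V} {v : V} (A : V → V → Prop)
    (c : G.Walk v v) (x : V) : Prop :=
  x ∈ c.support ∧ ∀ y, s(x, y) ∈ c.edges → A x y

/-- A sink of a hole w.r.t. an orientation: both its neighbours on the hole are in-neighbours. -/
def IsHoleSink {V : Type} {G : SimpleGraph V} {v : V} (A : V → V → Prop)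
    (c : G.Walk v v) (x : V) : Prop :=
  x ∈ c.support ∧ ∀ y, s(x, y) ∈ c.edges → A y x

/-- An extremum of a hole: a source or a sink of it. -/
def IsHoleExtremum {V : Type} {G : SimpleGraph V} {v : V} (A : V → V → Prop)
    (c : G.Walk v v) (x : V) : Prop :=
  IsHoleSource A c x ∨ IsHoleSink A c x

/-- The hole has exactly two sources and exactly two sinks. -/
def TwoSourcesTwoSinks {V : Type} {G : SimpleGraph V} {v : V} (A : V → V → Prop)
    (c : G.Walk v v) : Prop :=
  (∃ s₁ s₂, s₁ ≠ s₂ ∧ IsHoleSource A c s₁ ∧ IsHoleSource A c s₂ ∧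
    ∀ s, IsHoleSource A c s → s = s₁ ∨ s = s₂) ∧
  (∃ t₁ t₂, t₁ ≠ t₂ ∧ IsHoleSink A c t₁ ∧ IsHoleSink A c t₂ ∧
    ∀ t, IsHoleSink A c t → t = t₁ ∨ t = t₂)

/-- The pivot of a hole: a sink adjacent on the hole to all of its sources. -/
def IsHolePivot {V : Type} {G : SimpleGraph V} {v : V} (A : V → V → Prop)
    (c : G.Walk v v) (x : V) : Prop :=
  IsHoleSink A c x ∧ ∀ y, IsHoleSource A c y → s(x, y) ∈ c.edges

/-- A subordinate vertex of a hole: neither an antenna (source) nor the pivot. -/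
def IsHoleSubordinate {V : Type} {G : SimpleGraph V} {v : V} (A : V → V → Prop)
    (c : G.Walk v v) (x : V) : Prop :=
  x ∈ c.support ∧ ¬ IsHoleSource A c x ∧ ¬ IsHolePivot A c x

/-- `S` is the vertex set of a (possibly empty) branch (downward path) starting at `u`
in the rooted tree given by the parent function. -/
def IsBranchFrom {V : Type} (parent : V → V) (u : V) (S : Set V) : Prop :=
  S = ∅ ∨ (u ∈ S ∧ (∀ w ∈ S, w ≠ u → parent w ∈ S ∧ parent w ≠ w) ∧
    ∀ w ∈ S, ∀ w' ∈ S, w ≠ u → w' ≠ u → parent w = parent w' → w = w')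

/-- A Burling tree: a rooted tree (given by a parent function) together with a last-born
function and a choose function assigning to each non-last-born non-root vertex the vertex set
of a branch starting at the last-born of its parent. -/
structure BurlingTree (V : Type) where
  parent : V → V
  root : V
  parent_root : parent root = root
  reach : ∀ v, ∃ n, parent^[n] v = root
  lastBorn : V → V
  lastBorn_child : ∀ v, (∃ u, u ≠ v ∧ parent u = v) → parent (lastBorn v) = v ∧ lastBorn v ≠ v
  choosePath : V → Set V
  choosePath_empty : ∀ v, v = root ∨ v = lastBorn (parent v) → choosePath v = ∅
  choosePath_branch : ∀ v, v ≠ root → v ≠ lastBorn (parent v) →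
    IsBranchFrom parent (lastBorn (parent v)) (choosePath v)

/-- The arcs of the oriented graph fully derived from a Burling tree. -/
def BurlingTree.Arc {V : Type} (T : BurlingTree V) (u v : V) : Prop :=
  v ∈ T.choosePath u

/-- `A` orients `G` so that `G` with this orientation is an oriented graph derived from
some Burling tree (an oriented Burling graph). -/
def IsOrientedBurling {W : Type} (G : SimpleGraph W) (A : W → W → Prop) : Prop :=
  IsOrientation G A ∧
    ∃ (V : Type) (T : BurlingTree V) (f : W ↪ V), ∀ u v, A u v ↔ T.Arc (f u) (f v)

/-- A Burling graph (equivalently, a derived graph): the underlying graph of an oriented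
graph derived from a Burling tree. -/
def IsBurlingGraph {W : Type} (G : SimpleGraph W) : Prop :=
  ∃ A, IsOrientedBurling G A

/-- A global subordinate vertex of a Burling graph: subordinate in some hole, for every
orientation of the graph as an oriented Burling graph. -/
def IsGlobalSubordinate {W : Type} (G : SimpleGraph W) (x : W) : Prop :=
  ∀ A, IsOrientedBurling G A →
    ∃ (v : W) (c : G.Walk v v), IsHole G c ∧ IsHoleSubordinate A c x

/-- `H` is a subdivision of `G` via the branch-vertex embedding `f` and the system of
paths `P` replacing the edges of `G`. -/
def IsSubdivisionVia {V W : Type} (H : SimpleGraph W) (G : SimpleGraph V) (f : V ↪ W)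
    (P : ∀ ⦃u v : V⦄, G.Adj u v → H.Walk (f u) (f v)) : Prop :=
  (∀ ⦃u v⦄ (h : G.Adj u v), (P h).IsPath ∧ 1 ≤ (P h).length) ∧
  (∀ ⦃u v⦄ (h : G.Adj u v) (x : V), f x ∈ (P h).support → x = u ∨ x = v) ∧
  (∀ ⦃u v u' v'⦄ (h : G.Adj u v) (h' : G.Adj u' v'), s(u, v) ≠ s(u', v') →
    ∀ w, w ∈ (P h).support → w ∈ (P h').support → ∃ x : V, w = f x) ∧
  (∀ w : W, ∃ u v, ∃ h : G.Adj u v, w ∈ (P h).support) ∧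
  (∀ ⦃x y : W⦄, H.Adj x y → ∃ u v, ∃ h : G.Adj u v, s(x, y) ∈ (P h).edges)

/-- `H` is a subdivision of `G`. -/
def IsSubdivision {V W : Type} (H : SimpleGraph W) (G : SimpleGraph V) : Prop :=
  ∃ (f : V ↪ W) (P : ∀ ⦃u v : V⦄, G.Adj u v → H.Walk (f u) (f v)), IsSubdivisionVia H G f P

/-- `G` contains an induced copy of `H`. -/
def InducedCopy {V W : Type} (H : SimpleGraph W) (G : SimpleGraph V) : Prop :=
  ∃ f : W ↪ V, ∀ a b, H.Adj a b ↔ G.Adj (f a) (f b)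

/-- The clique number of a graph. -/
noncomputable def cliqueNumber {V : Type} (G : SimpleGraph V) : ℕ :=
  sSup {n | ∃ s : Finset V, G.IsNClique n s}

/-- `G` belongs to `Forb*(H)`: it has no induced subdivision of `H`. -/
def InForbs {VH V : Type} (H : SimpleGraph VH) (G : SimpleGraph V) : Prop :=
  ∀ (U : Type) (S : SimpleGraph U), IsSubdivision S H → ¬ InducedCopy S G

/-- `H` is weakly pervasive: the class `Forb*(H)` (of finite graphs) is χ-bounded. -/
def WeaklyPervasive {VH : Type} (H : SimpleGraph VH) : Prop :=
  ∃ f : ℕ → ℕ, ∀ (V : Type) (_ : Fintype V) (G : SimpleGraph V),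
    InForbs H G → G.chromaticNumber ≤ (f (cliqueNumber G) : ℕ∞)

/-- `G` has a star cutset centered at `v`. -/
def HasStarCutsetAt {V : Type} (G : SimpleGraph V) (v : V) : Prop :=
  ∃ S : Set V, v ∈ S ∧ (∀ u ∈ S, u = v ∨ G.Adj v u) ∧ ¬ (G.induce Sᶜ).Preconnected

/-- `G` has a star cutset. -/
def HasStarCutset {V : Type} (G : SimpleGraph V) : Prop :=
  ∃ v, HasStarCutsetAt G v

/-- The structure of an `m`-necklace on the graph `G`: beads `B i` (chordless cycles of
length at least 4 through the non-adjacent vertices `a i`, `b i`) joined cyclically by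
paths `P i` from `b i` to `a (i+1)` (of length possibly 0, i.e. identification),
with no further vertices or edges. -/
structure Necklace {V : Type} (G : SimpleGraph V) (m : ℕ) where
  a : ZMod m → V
  b : ZMod m → V
  B : ∀ i, G.Walk (a i) (a i)
  P : ∀ i, G.Walk (b i) (a (i + 1))
  B_cycle : ∀ i, (B i).IsCycle
  B_len : ∀ i, 4 ≤ (B i).length
  b_mem : ∀ i, b i ∈ (B i).support
  ab_ne : ∀ i, a i ≠ b i
  ab_nonadj : ∀ i, ¬ G.Adj (a i) (b i)
  P_path : ∀ i, (P i).IsPath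
  bead_disjoint : ∀ i j, i ≠ j → ∀ x, x ∈ (B i).support → x ∈ (B j).support →
    (j = i + 1 ∧ x = b i ∧ x = a j) ∨ (i = j + 1 ∧ x = b j ∧ x = a i)
  path_bead_disjoint : ∀ i j (x : V), x ∈ (P i).support → x ∈ (B j).support →
    x = b i ∨ x = a (i + 1)
  path_disjoint : ∀ i j, i ≠ j → ∀ x, x ∈ (P i).support → x ∈ (P j).support →
    (x = b i ∨ x = a (i + 1)) ∧ (x = b j ∨ x = a (j + 1))
  cover_vertex : ∀ x : V, (∃ i, x ∈ (B i).support) ∨ ∃ i, x ∈ (P i).support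
  cover_edge : ∀ x y, G.Adj x y → (∃ i, s(x, y) ∈ (B i).edges) ∨ ∃ i, s(x, y) ∈ (P i).edges

/-- The bead `B i` of a necklace is short if `a i` and `b i` have a common neighbour. -/
def Necklace.Short {V : Type} {G : SimpleGraph V} {m : ℕ} (N : Necklace G m)
    (i : ZMod m) : Prop :=
  ∃ w, G.Adj (N.a i) w ∧ G.Adj (N.b i) w

/-- A chandelier: an in-tree (given by a parent function on `V \ {hub}`) with at least two
leaves, together with an extra vertex `hub` joined to all the leaves. -/
structure Chandelier (V : Type) where
  hub : V
  root : V
  parent : V → V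
  hub_ne_root : hub ≠ root
  parent_root : parent root = root
  parent_hub : parent hub = hub
  parent_ne_hub : ∀ u, u ≠ hub → parent u ≠ hub
  reach : ∀ u, u ≠ hub → ∃ n, parent^[n] u = root
  two_leaves : ∃ l₁ l₂ : V, l₁ ≠ l₂ ∧
    (l₁ ≠ hub ∧ l₁ ≠ root ∧ ∀ w, parent w = l₁ → w = l₁) ∧
    (l₂ ≠ hub ∧ l₂ ≠ root ∧ ∀ w, parent w = l₂ → w = l₂)

/-- A leaf of the in-tree of a chandelier. -/
def Chandelier.IsLeaf {V : Type} (C : Chandelier V) (u : V) : Prop :=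
  u ≠ C.hub ∧ u ≠ C.root ∧ ∀ w, C.parent w = u → w = u

/-- The arcs of (the oriented version of) a chandelier. -/
def Chandelier.Arc {V : Type} (C : Chandelier V) (u w : V) : Prop :=
  (u ≠ C.hub ∧ u ≠ C.root ∧ w = C.parent u) ∨ (C.IsLeaf u ∧ w = C.hub)

/-- The underlying (non-oriented) graph of a chandelier. -/
def Chandelier.graph {V : Type} (C : Chandelier V) : SimpleGraph V :=
  SimpleGraph.fromRel C.Arc

/-- There is a vertex lying on every cycle of the graph. -/
def HasUniversalCycleVertex {V : Type} (G : SimpleGraph V) : Prop :=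
  ∃ x : V, ∀ (w : V) (c : G.Walk w w), c.IsCycle → x ∈ c.support

/-- A Burling-admissible type-4 subdivision of `K₄` sitting inside `G`: branch vertices
`x, y, z, w`, where the two non-subdivided edges `xy`, `xz` share the endpoint `x`, and the
four other edges are replaced by internally disjoint paths of length at least 2. -/
structure Type4K4Core {V : Type} (G : SimpleGraph V) where
  x : V
  y : V
  z : V
  w : V
  ne_xy : x ≠ y
  ne_xz : x ≠ z
  ne_xw : x ≠ w
  ne_yz : y ≠ z
  ne_yw : y ≠ w
  ne_zw : z ≠ w
  adj_xy : G.Adj x y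
  adj_xz : G.Adj x z
  Pxw : G.Walk x w
  Pyz : G.Walk y z
  Pyw : G.Walk y w
  Pzw : G.Walk z w
  Pxw_path : Pxw.IsPath
  Pyz_path : Pyz.IsPath
  Pyw_path : Pyw.IsPath
  Pzw_path : Pzw.IsPath
  Pxw_len : 2 ≤ Pxw.length
  Pyz_len : 2 ≤ Pyz.length
  Pyw_len : 2 ≤ Pyw.length
  Pzw_len : 2 ≤ Pzw.length
  d₁ : ∀ v, v ∈ Pxw.support → v ∈ Pyz.support → False
  d₂ : ∀ v, v ∈ Pxw.support → v ∈ Pyw.support → v = w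
  d₃ : ∀ v, v ∈ Pxw.support → v ∈ Pzw.support → v = w
  d₄ : ∀ v, v ∈ Pyz.support → v ∈ Pyw.support → v = y
  d₅ : ∀ v, v ∈ Pyz.support → v ∈ Pzw.support → v = z
  d₆ : ∀ v, v ∈ Pyw.support → v ∈ Pzw.support → v = w

/-- The vertex set of a type-4 `K₄`-subdivision configuration. -/
def Type4K4Core.supp {V : Type} {G : SimpleGraph V} (c : Type4K4Core G) : Set V :=
  {v | v ∈ c.Pxw.support ∨ v ∈ c.Pyz.support ∨ v ∈ c.Pyw.support ∨ v ∈ c.Pzw.support}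

/-- The edge set of a type-4 `K₄`-subdivision configuration. -/
def Type4K4Core.edges {V : Type} {G : SimpleGraph V} (c : Type4K4Core G) : Set (Sym2 V) :=
  {e | e ∈ c.Pxw.edges ∨ e ∈ c.Pyz.edges ∨ e ∈ c.Pyw.edges ∨ e ∈ c.Pzw.edges ∨
    e = s(c.x, c.y) ∨ e = s(c.x, c.z)}

/-- The configuration exhausts the whole graph `G`. -/
def Type4K4Core.Spanning {V : Type} {G : SimpleGraph V} (c : Type4K4Core G) : Prop :=
  (∀ v : V, v ∈ c.supp) ∧ ∀ u v, G.Adj u v → s(u, v) ∈ c.edges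

/-- A vertex of degree exactly 2. -/
def DegTwo {V : Type} (G : SimpleGraph V) (x : V) : Prop :=
  ∃ p q, p ≠ q ∧ G.Adj x p ∧ G.Adj x q ∧ ∀ r, G.Adj x r → r = p ∨ r = q



open SimpleGraph

variable {V : Type} {G : SimpleGraph V} {S : Set V}

/-- Reachability avoiding a set `S`. -/
def AReach (G : SimpleGraph V) (S : Set V) (x y : V) : Prop :=
  ∃ p : G.Walk x y, ∀ z ∈ p.support, z ∉ S

lemma AReach.left_not {x y : V} (h : AReach G S x y) : x ∉ S := by
  obtain ⟨p, hp⟩ := h; exact hp x p.start_mem_support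

lemma AReach.right_not {x y : V} (h : AReach G S x y) : y ∉ S := by
  obtain ⟨p, hp⟩ := h; exact hp y p.end_mem_support

lemma AReach.symm {x y : V} (h : AReach G S x y) : AReach G S y x := by
  obtain ⟨p, hp⟩ := h
  refine ⟨p.reverse, ?_⟩
  intro z hz
  rw [SimpleGraph.Walk.support_reverse] at hz
  exact hp z (List.mem_reverse.mp hz)

lemma AReach.trans {x y z : V} (h : AReach G S x y) (h' : AReach G S y z) :
    AReach G S x z := by
  obtain ⟨p, hp⟩ := h; obtain ⟨q, hq⟩ := h'
  refine ⟨p.append q, ?_⟩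
  intro u hu
  rcases (SimpleGraph.Walk.mem_support_append_iff _ _).mp hu with h | h
  · exact hp u h
  · exact hq u h

lemma AReach.refl {x : V} (hx : x ∉ S) : AReach G S x x :=
  ⟨SimpleGraph.Walk.nil, by simpa using hx⟩

/-- H1: the two halves of a split of a walk with nodup support intersect only in the split
vertex. -/
lemma take_drop_inter [DecidableEq V] {u u' x : V} {p : G.Walk u u'} (hp : p.support.Nodup)
    (hx : x ∈ p.support) :
    ∀ z, z ∈ (p.takeUntil x hx).support → z ∈ (p.dropUntil x hx).support → z = x := by
  intro z hzt hzd
  have hspec := p.take_spec hx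
  have hs : p.support = (p.takeUntil x hx).support ++ (p.dropUntil x hx).support.tail := by
    conv_lhs => rw [← hspec]
    exact SimpleGraph.Walk.support_append _ _
  rw [hs] at hp
  have hd : (p.dropUntil x hx).support = x :: (p.dropUntil x hx).support.tail :=
    SimpleGraph.Walk.support_eq_cons _
  rw [hd] at hzd
  rcases List.mem_cons.mp hzd with h | h
  · exact h
  · exact absurd hzt (fun hzt => (List.disjoint_of_nodup_append hp) hzt h)

/-- NAV: in a walk with nodup support, any two support vertices are joined by a sub-walk whose
support is inside the walk's support and which meets the walk's endpoints only at its own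
endpoints. -/
lemma nav [DecidableEq V] {u u' x y : V} {p : G.Walk u u'} (hp : p.support.Nodup)
    (hx : x ∈ p.support) (hy : y ∈ p.support) :
    ∃ r : G.Walk x y, r.support ⊆ p.support ∧
      (∀ z ∈ r.support, z = x ∨ z = y ∨ (z ≠ u ∧ z ≠ u')) := by
  by_cases hxy : x ∈ (p.takeUntil y hy).support
  · refine ⟨(p.takeUntil y hy).dropUntil x hxy, ?_, ?_⟩
    · intro z hz
      exact (p.support_takeUntil_subset hy)
        ((SimpleGraph.Walk.support_dropUntil_subset _ hxy) hz)
    · intro z hz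
      by_cases hzx : z = x
      · exact Or.inl hzx
      by_cases hzy : z = y
      · exact Or.inr (Or.inl hzy)
      refine Or.inr (Or.inr ⟨?_, ?_⟩)
      · rintro rfl
        have h1 : z ∈ ((p.takeUntil y hy).takeUntil x hxy).support :=
          SimpleGraph.Walk.start_mem_support _
        have hnd : (p.takeUntil y hy).support.Nodup := by
          have := SimpleGraph.Walk.IsPath.takeUntil (SimpleGraph.Walk.IsPath.mk' hp) hy
          exact this.support_nodup
        exact hzx (take_drop_inter hnd hxy z h1 hz)
      · rintro rfl
        have h2 : z ∈ (p.dropUntil y hy).support := SimpleGraph.Walk.end_mem_support _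
        have h3 : z ∈ (p.takeUntil y hy).support :=
          (SimpleGraph.Walk.support_dropUntil_subset _ hxy) hz
        exact hzy (take_drop_inter hp hy z h3 h2)
  · have hx' : x ∈ (p.dropUntil y hy).support := by
      have : x ∈ p.support := hx
      rw [← p.take_spec hy] at this
      rcases (SimpleGraph.Walk.mem_support_append_iff _ _).mp this with h | h
      · exact absurd h hxy
      · exact h
    refine ⟨((p.dropUntil y hy).takeUntil x hx').reverse, ?_, ?_⟩
    · intro z hz
      rw [SimpleGraph.Walk.support_reverse, List.mem_reverse] at hz
      exact (p.support_dropUntil_subset hy)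
        ((SimpleGraph.Walk.support_takeUntil_subset _ hx') hz)
    · intro z hz
      rw [SimpleGraph.Walk.support_reverse, List.mem_reverse] at hz
      by_cases hzx : z = x
      · exact Or.inl hzx
      by_cases hzy : z = y
      · exact Or.inr (Or.inl hzy)
      refine Or.inr (Or.inr ⟨?_, ?_⟩)
      · rintro rfl
        have h1 : z ∈ (p.takeUntil y hy).support := SimpleGraph.Walk.start_mem_support _
        have h2 : z ∈ (p.dropUntil y hy).support :=
          (SimpleGraph.Walk.support_takeUntil_subset _ hx') hz
        exact hzy (take_drop_inter hp hy z h1 h2)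
      · rintro rfl
        have hnd : (p.dropUntil y hy).support.Nodup :=
          (SimpleGraph.Walk.IsPath.dropUntil (SimpleGraph.Walk.IsPath.mk' hp) hy).support_nodup
        have h2 : z ∈ ((p.dropUntil y hy).dropUntil x hx').support :=
          SimpleGraph.Walk.end_mem_support _
        exact hzx (take_drop_inter hnd hx' z hz h2)

lemma mem_support_rotate [DecidableEq V] {v u : V} (c : G.Walk v v) (h : u ∈ c.support) (z : V) :
    z ∈ (c.rotate _ h).support ↔ z ∈ c.support := by
  have : z ∈ c.support ↔ z ∈ (c.takeUntil u h).support ∨ z ∈ (c.dropUntil u h).support := by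
    conv_lhs => rw [← c.take_spec h]
    exact SimpleGraph.Walk.mem_support_append_iff _ _
  rw [this]
  unfold SimpleGraph.Walk.rotate
  rw [SimpleGraph.Walk.mem_support_append_iff]
  tauto

lemma mem_edges_rotate [DecidableEq V] {v u : V} (c : G.Walk v v) (h : u ∈ c.support) (e : Sym2 V) :
    e ∈ (c.rotate _ h).edges ↔ e ∈ c.edges :=
  (c.rotate_edges _ h).perm.mem_iff


/-- Removing the base vertex of a cycle leaves a path through all other vertices, whose ends
are the two cycle-neighbours of the base vertex. -/
lemma cycle_erase [DecidableEq V] {v : V} {c : G.Walk v v} (hc : c.IsCycle) :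
    ∃ (w₁ z₁ : V) (pr : G.Walk w₁ z₁),
      pr.support.Nodup ∧ v ∉ pr.support ∧
      (∀ z, z ∈ c.support ↔ (z = v ∨ z ∈ pr.support)) ∧
      (∀ t, s(v, t) ∈ c.edges → t = w₁ ∨ t = z₁) := by
  cases c with
  | nil => exact absurd hc (SimpleGraph.Walk.IsCycle.not_of_nil)
  | cons hadj q =>
    rename_i w₁
    rw [SimpleGraph.Walk.cons_isCycle_iff] at hc
    obtain ⟨hq, he⟩ := hc
    -- destruct q from the rear
    have hqrr : q.reverse.reverse = q := SimpleGraph.Walk.reverse_reverse q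
    cases hqr : q.reverse with
    | nil =>
      exfalso
      have : q = SimpleGraph.Walk.nil.reverse := by rw [← hqr, hqrr]
      rw [SimpleGraph.Walk.reverse_nil] at this
      subst this
      exact G.loopless.irrefl v hadj
    | cons hz r =>
      rename_i z₁
      refine ⟨w₁, z₁, r.reverse, ?_, ?_, ?_, ?_⟩
      · have : q.support.Nodup := hq.support_nodup
        have hqs : q.support = r.reverse.support ++ [v] := by
          rw [← hqrr, hqr]
          rw [SimpleGraph.Walk.support_reverse, SimpleGraph.Walk.support_cons]
          simp
        rw [hqs] at this
        exact (List.nodup_append.mp this).1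
      · have : q.support.Nodup := hq.support_nodup
        have hqs : q.support = r.reverse.support ++ [v] := by
          rw [← hqrr, hqr]
          rw [SimpleGraph.Walk.support_reverse, SimpleGraph.Walk.support_cons]
          simp
        rw [hqs] at this
        intro hv
        exact (List.disjoint_of_nodup_append this) hv (by simp)
      · intro z
        have hqs : q.support = r.reverse.support ++ [v] := by
          rw [← hqrr, hqr]
          rw [SimpleGraph.Walk.support_reverse, SimpleGraph.Walk.support_cons]
          simp
        rw [SimpleGraph.Walk.support_cons, List.mem_cons, hqs, List.mem_append]
        simp only [List.mem_singleton]
        tauto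
      · intro t ht
        rw [SimpleGraph.Walk.edges_cons, List.mem_cons] at ht
        rcases ht with ht | ht
        · left
          have := Sym2.congr_right.mp ht
          exact this
        · right
          have hqe : q.edges = (r.edges.map id).reverse ++ [s(v, z₁)] := by
            have : q.edges = q.reverse.edges.reverse := by
              rw [SimpleGraph.Walk.edges_reverse, List.reverse_reverse]
            rw [this, hqr, SimpleGraph.Walk.edges_cons]
            simp
          rw [hqe, List.mem_append] at ht
          rcases ht with ht | ht
          · exfalso
            simp only [List.map_id, List.mem_reverse] at ht
            have hv : v ∈ r.support := SimpleGraph.Walk.fst_mem_support_of_mem_edges r ht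
            -- v ∉ r.support:
            have : q.support.Nodup := hq.support_nodup
            have hqs : q.support = r.reverse.support ++ [v] := by
              rw [← hqrr, hqr]
              rw [SimpleGraph.Walk.support_reverse, SimpleGraph.Walk.support_cons]
              simp
            rw [hqs] at this
            have hv' : v ∈ r.reverse.support := by
              rw [SimpleGraph.Walk.support_reverse]; exact List.mem_reverse.mpr hv
            exact (List.disjoint_of_nodup_append this) hv' (by simp)
          · simp only [List.mem_singleton] at ht
            exact Sym2.congr_right.mp ht

/-- Connectivity inside a cycle from which `S` removes at most the closed cycle-neighbourhood
of a single vertex of `S`. -/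
lemma cycle_conn [DecidableEq V] {r : V} {c : G.Walk r r} (hc : c.IsCycle)
    (hyp : (∀ z ∈ c.support, z ∉ S) ∨
      ∃ v ∈ S, v ∈ c.support ∧ ∀ z ∈ c.support, z ∈ S → z = v ∨ s(v, z) ∈ c.edges) :
    ∀ x ∈ c.support, x ∉ S → ∀ y ∈ c.support, y ∉ S → AReach G S x y := by
  intro x hx hxS y hy hyS
  rcases hyp with hyp | ⟨v, hvS, hvc, hyp⟩
  · -- whole cycle avoids S
    have hy' : y ∈ (c.rotate _ hx).support := (mem_support_rotate c hx y).mpr hy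
    refine ⟨(c.rotate _ hx).takeUntil y hy', ?_⟩
    intro z hz
    have : z ∈ (c.rotate _ hx).support := SimpleGraph.Walk.support_takeUntil_subset _ hy' hz
    exact hyp z ((mem_support_rotate c hx z).mp this)
  · -- rotate at v and erase v
    have hc' : (c.rotate _ hvc).IsCycle := hc.rotate hvc
    obtain ⟨w₁, z₁, pr, hnd, hvpr, hmem, hnbr⟩ := cycle_erase hc'
    have hxv : x ≠ v := fun h => hxS (h ▸ hvS)
    have hyv : y ≠ v := fun h => hyS (h ▸ hvS)
    have hxpr : x ∈ pr.support := by
      have := (hmem x).mp ((mem_support_rotate c hvc x).mpr hx)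
      tauto
    have hypr : y ∈ pr.support := by
      have := (hmem y).mp ((mem_support_rotate c hvc y).mpr hy)
      tauto
    obtain ⟨rr, hsub, hend⟩ := nav hnd hxpr hypr
    refine ⟨rr, ?_⟩
    intro z hz hzS
    have hzc : z ∈ c.support := by
      have : z ∈ pr.support := hsub hz
      have := (hmem z).mpr (Or.inr this)
      exact (mem_support_rotate c hvc z).mp this
    rcases hyp z hzc hzS with hzv | hze
    · exact hvpr (hzv ▸ hsub hz)
    · have hze' : s(v, z) ∈ (c.rotate _ hvc).edges := (mem_edges_rotate c hvc _).mpr hze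
      rcases hnbr z hze' with h | h
      · rcases hend z hz with h' | h' | h'
        · exact hxS (h' ▸ hzS)
        · exact hyS (h' ▸ hzS)
        · exact h'.1 h
      · rcases hend z hz with h' | h' | h'
        · exact hxS (h' ▸ hzS)
        · exact hyS (h' ▸ hzS)
        · exact h'.2 h


/-- From any vertex of a walk avoiding `S`, both endpoints are `S`-avoiding reachable. -/
lemma walk_avoid_reach [DecidableEq V] {u u' : V} {p : G.Walk u u'}
    (hp : ∀ z ∈ p.support, z ∉ S) : ∀ x ∈ p.support, AReach G S x u' := by
  intro x hx
  refine ⟨p.dropUntil x hx, ?_⟩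
  intro z hz
  exact hp z (SimpleGraph.Walk.support_dropUntil_subset _ hx hz)

lemma walk_avoid_conn [DecidableEq V] {u u' : V} {p : G.Walk u u'}
    (hp : ∀ z ∈ p.support, z ∉ S) : ∀ x ∈ p.support, ∀ y ∈ p.support, AReach G S x y :=
  fun x hx y hy => (walk_avoid_reach hp x hx).trans (walk_avoid_reach hp y hy).symm

/-- E3: in a path whose `S`-vertices lie in the closed path-neighbourhood of a vertex `v ∈ S`
on the path, every survivor reaches one of the two ends avoiding `S`. -/
lemma path_reach_ends [DecidableEq V] {u u' : V} {p : G.Walk u u'} (hp : p.IsPath) {v : V}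
    (hv : v ∈ S) (hvp : v ∈ p.support)
    (hyp : ∀ z ∈ p.support, z ∈ S → z = v ∨ s(v, z) ∈ p.edges) :
    ∀ x ∈ p.support, x ∉ S → AReach G S x u ∨ AReach G S x u' := by
  intro x hx hxS
  have hnd := hp.support_nodup
  have hxv : x ≠ v := fun h => hxS (h ▸ hv)
  have hedges : p.edges = (p.takeUntil v hvp).edges ++ (p.dropUntil v hvp).edges := by
    conv_lhs => rw [← p.take_spec hvp]
    exact SimpleGraph.Walk.edges_append _ _
  have hxsplit : x ∈ (p.takeUntil v hvp).support ∨ x ∈ (p.dropUntil v hvp).support := by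
    have : x ∈ p.support := hx
    rw [← p.take_spec hvp] at this
    exact (SimpleGraph.Walk.mem_support_append_iff _ _).mp this
  have hndt : (p.takeUntil v hvp).support.Nodup := (hp.takeUntil hvp).support_nodup
  have hndd : (p.dropUntil v hvp).support.Nodup := (hp.dropUntil hvp).support_nodup
  rcases hxsplit with hx1 | hx2
  · left
    set p₁ := p.takeUntil v hvp with hp₁
    refine ⟨(p₁.takeUntil x hx1).reverse, ?_⟩
    intro z hz hzS
    rw [SimpleGraph.Walk.support_reverse, List.mem_reverse] at hz
    have hzp : z ∈ p.support :=
      p.support_takeUntil_subset hvp (SimpleGraph.Walk.support_takeUntil_subset _ hx1 hz)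
    rcases hyp z hzp hzS with hzv | hze
    · -- z = v in the prefix-before-x: impossible
      subst hzv
      have h2 : z ∈ (p₁.dropUntil x hx1).support := SimpleGraph.Walk.end_mem_support _
      have := take_drop_inter hndt hx1 z hz h2
      exact hxS (this ▸ hzS)
    · have hvz : v ≠ z := (p.adj_of_mem_edges hze).ne
      rw [hedges, List.mem_append] at hze
      rcases hze with hze | hze
      · -- edge inside p₁
        have h1edges : p₁.edges = (p₁.takeUntil x hx1).edges ++ (p₁.dropUntil x hx1).edges := by
          conv_lhs => rw [← p₁.take_spec hx1]
          exact SimpleGraph.Walk.edges_append _ _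
        rw [h1edges, List.mem_append] at hze
        rcases hze with hze | hze
        · have : v ∈ (p₁.takeUntil x hx1).support :=
            SimpleGraph.Walk.fst_mem_support_of_mem_edges _ hze
          have h2 : v ∈ (p₁.dropUntil x hx1).support := SimpleGraph.Walk.end_mem_support _
          have := take_drop_inter hndt hx1 v this h2
          exact hxS (this ▸ hv)
        · have : z ∈ (p₁.dropUntil x hx1).support :=
            SimpleGraph.Walk.snd_mem_support_of_mem_edges _ hze
          have := take_drop_inter hndt hx1 z hz this
          exact hxS (this ▸ hzS)
      · -- edge inside p₂ : then z in p₂, but z also in p₁ prefix, so z = v, contra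
        have hz2 : z ∈ (p.dropUntil v hvp).support :=
          SimpleGraph.Walk.snd_mem_support_of_mem_edges _ hze
        have hz1 : z ∈ (p.takeUntil v hvp).support :=
          SimpleGraph.Walk.support_takeUntil_subset _ hx1 hz
        exact hvz (take_drop_inter hnd hvp z hz1 hz2).symm
  · right
    set p₂ := p.dropUntil v hvp with hp₂
    refine ⟨p₂.dropUntil x hx2, ?_⟩
    intro z hz hzS
    have hzp : z ∈ p.support :=
      p.support_dropUntil_subset hvp (SimpleGraph.Walk.support_dropUntil_subset _ hx2 hz)
    rcases hyp z hzp hzS with hzv | hze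
    · subst hzv
      have h1 : z ∈ (p₂.takeUntil x hx2).support := SimpleGraph.Walk.start_mem_support _
      have := take_drop_inter hndd hx2 z h1 hz
      exact hxS (this ▸ hzS)
    · have hvz : v ≠ z := (p.adj_of_mem_edges hze).ne
      rw [hedges, List.mem_append] at hze
      rcases hze with hze | hze
      · have hz1 : z ∈ (p.takeUntil v hvp).support :=
          SimpleGraph.Walk.snd_mem_support_of_mem_edges _ hze
        have hz2 : z ∈ (p.dropUntil v hvp).support :=
          SimpleGraph.Walk.support_dropUntil_subset _ hx2 hz
        exact hvz (take_drop_inter hnd hvp z hz1 hz2).symm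
      · have h2edges : p₂.edges = (p₂.takeUntil x hx2).edges ++ (p₂.dropUntil x hx2).edges := by
          conv_lhs => rw [← p₂.take_spec hx2]
          exact SimpleGraph.Walk.edges_append _ _
        rw [h2edges, List.mem_append] at hze
        rcases hze with hze | hze
        · have : z ∈ (p₂.takeUntil x hx2).support :=
            SimpleGraph.Walk.snd_mem_support_of_mem_edges _ hze
          have := take_drop_inter hndd hx2 z this hz
          exact hxS (this ▸ hzS)
        · have : v ∈ (p₂.dropUntil x hx2).support :=
            SimpleGraph.Walk.fst_mem_support_of_mem_edges _ hze
          have h1 : v ∈ (p₂.takeUntil x hx2).support := SimpleGraph.Walk.start_mem_support _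
          have := take_drop_inter hndd hx2 v h1 this
          exact hxS (this ▸ hv)

/-- E3b: if the only possible `S`-vertex of a path is its start, survivors reach the end. -/
lemma path_reach_end_of_start [DecidableEq V] {u u' : V} {p : G.Walk u u'}
    (hp : p.IsPath) (hyp : ∀ z ∈ p.support, z ∈ S → z = u) :
    ∀ x ∈ p.support, x ∉ S → AReach G S x u' := by
  intro x hx hxS
  refine ⟨p.dropUntil x hx, ?_⟩
  intro z hz hzS
  have hzp : z ∈ p.support := SimpleGraph.Walk.support_dropUntil_subset _ hx hz
  have hzu := hyp z hzp hzS
  subst hzu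
  have h1 : z ∈ (p.takeUntil x hx).support := SimpleGraph.Walk.start_mem_support _
  have := take_drop_inter hp.support_nodup hx z h1 hz
  exact hxS (this ▸ hzS)

/-- E3b': if the only possible `S`-vertex of a path is its end, survivors reach the start. -/
lemma path_reach_start_of_end [DecidableEq V] {u u' : V} {p : G.Walk u u'}
    (hp : p.IsPath) (hyp : ∀ z ∈ p.support, z ∈ S → z = u') :
    ∀ x ∈ p.support, x ∉ S → AReach G S x u := by
  intro x hx hxS
  have hx' : x ∈ p.reverse.support := by
    rw [SimpleGraph.Walk.support_reverse]; exact List.mem_reverse.mpr hx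
  exact path_reach_end_of_start hp.reverse (fun z hz hzS => hyp z (by
    rw [SimpleGraph.Walk.support_reverse] at hz; exact List.mem_reverse.mp hz) hzS) x hx' hxS

/-- Transfer an `S`-avoiding walk to reachability in the induced subgraph on `Sᶜ`. -/
lemma walk_induce_reachable : ∀ {x y : V} (p : G.Walk x y), (∀ z ∈ p.support, z ∉ S) →
    ∀ (hx : x ∉ S) (hy : y ∉ S), (G.induce Sᶜ).Reachable ⟨x, hx⟩ ⟨y, hy⟩ := by
  intro x y p
  induction p with
  | nil => intro _ _ _; exact SimpleGraph.Reachable.refl _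
  | @cons a b c hadj q ih =>
    intro hp hx hy
    have hb : b ∉ S := hp b (by simp [SimpleGraph.Walk.support_cons])
    have : (G.induce Sᶜ).Adj ⟨a, hx⟩ ⟨b, hb⟩ := by
      simp [SimpleGraph.comap_adj, hadj]
    refine this.reachable.trans (ih (fun z hz => hp z ?_) hb hy)
    rw [SimpleGraph.Walk.support_cons]
    exact List.mem_cons_of_mem _ hz

lemma areach_induce_reachable {x y : V} (h : AReach G S x y) (hx : x ∉ S) (hy : y ∉ S) :
    (G.induce Sᶜ).Reachable ⟨x, hx⟩ ⟨y, hy⟩ := by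
  obtain ⟨p, hp⟩ := h
  exact walk_induce_reachable p hp hx hy

/-- Confinement: walks in the induced graph on `Sᶜ` stay inside an adjacency-closed set. -/
lemma induce_walk_confined {T : Set V} 
    (hclosed : ∀ u w : V, u ∈ T → u ∉ S → w ∉ S → G.Adj u w → w ∈ T) :
    ∀ {xx yy : ↥Sᶜ} (p : (G.induce Sᶜ).Walk xx yy), (xx : V) ∈ T → (yy : V) ∈ T := by
  intro xx yy p
  induction p with
  | nil => exact id
  | @cons a b c hadj q ih =>
    intro ha
    refine ih ?_
    have : G.Adj (a : V) (b : V) := hadj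
    exact hclosed a b ha a.2 b.2 this


section Toolkit

variable {m : ℕ} (N : Necklace G m) (hm : 2 ≤ m)

lemma zmod_one_ne_zero (hm : 2 ≤ m) : (1 : ZMod m) ≠ 0 := by
  haveI : Fact (1 < m) := ⟨hm⟩
  exact one_ne_zero

lemma zmod_succ_ne (hm : 2 ≤ m) (i : ZMod m) : i + 1 ≠ i := by
  intro h
  exact zmod_one_ne_zero hm (by linear_combination h - i)

lemma zmod_succ_ne' (hm : 2 ≤ m) (i : ZMod m) : i ≠ i + 1 := (zmod_succ_ne hm i).symm

lemma Necklace.a_mem (i : ZMod m) : N.a i ∈ (N.B i).support :=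
  SimpleGraph.Walk.start_mem_support _

/-- v2 -/
lemma Necklace.b_mem_other {j k : ZMod m} (hjk : k ≠ j) (h : N.b j ∈ (N.B k).support) :
    N.b j = N.a k ∧ k = j + 1 := by
  rcases N.bead_disjoint j k (fun h' => hjk h'.symm) (N.b j) (N.b_mem j) h with
    ⟨h1, _, h3⟩ | ⟨_, _, h3⟩
  · exact ⟨h3, h1⟩
  · exact absurd h3.symm (N.ab_ne j)

/-- v3 -/
lemma Necklace.a_mem_other {j k : ZMod m} (hjk : k ≠ j) (h : N.a j ∈ (N.B k).support) :
    N.a j = N.b k ∧ j = k + 1 := by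
  rcases N.bead_disjoint j k (fun h' => hjk h'.symm) (N.a j) (N.a_mem j) h with
    ⟨_, h2, _⟩ | ⟨h1, h2, _⟩
  · exact absurd h2 (N.ab_ne j)
  · exact ⟨h2, h1⟩

/-- v4 -/
lemma Necklace.b_inj {j k : ZMod m} (h : N.b j = N.b k) : j = k := by
  by_contra hjk
  have hmem : N.b j ∈ (N.B k).support := by rw [h]; exact N.b_mem k
  obtain ⟨h1, _⟩ := N.b_mem_other (fun h' => hjk h'.symm) hmem
  exact N.ab_ne k (h1.symm.trans h)

/-- v5 -/
lemma Necklace.a_inj {j k : ZMod m} (h : N.a j = N.a k) : j = k := by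
  by_contra hjk
  have hmem : N.a j ∈ (N.B k).support := by rw [h]; exact N.a_mem k
  obtain ⟨h1, _⟩ := N.a_mem_other (fun h' => hjk h'.symm) hmem
  exact N.ab_ne k ((h.symm.trans h1))

/-- v6 -/
lemma Necklace.a_eq_b {j k : ZMod m} (h : N.a j = N.b k) : j = k + 1 := by
  by_cases hjk : j = k
  · exact absurd (hjk ▸ h) (N.ab_ne k)
  · have hmem : N.a j ∈ (N.B k).support := by rw [h]; exact N.b_mem k
    exact (N.a_mem_other (fun h' => hjk h'.symm) hmem).2

/-- v13 -/
lemma Necklace.b_mem_path {j k : ZMod m} (h : N.b j ∈ (N.P k).support) : k = j := by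
  by_contra hkj
  rcases N.path_bead_disjoint k j (N.b j) h (N.b_mem j) with h1 | h1
  · exact hkj (N.b_inj h1).symm
  · have := N.a_eq_b h1.symm
    exact hkj (add_right_cancel this)

/-- v12 -/
lemma Necklace.a_mem_path {j k : ZMod m} (h : N.a (j + 1) ∈ (N.P k).support) : k = j := by
  by_contra hkj
  rcases N.path_bead_disjoint k (j + 1) (N.a (j + 1)) h (N.a_mem (j + 1)) with h1 | h1
  · have := N.a_eq_b h1
    exact hkj (add_right_cancel this.symm)
  · exact hkj (add_right_cancel (N.a_inj h1).symm)


/-- Beads are chordless. -/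
lemma Necklace.bead_chordless (hm : 2 ≤ m) {j : ZMod m} {x y : V}
    (hx : x ∈ (N.B j).support) (hy : y ∈ (N.B j).support) (hadj : G.Adj x y) :
    s(x, y) ∈ (N.B j).edges := by
  rcases N.cover_edge x y hadj with ⟨k, hk⟩ | ⟨k, hk⟩
  · by_cases hkj : k = j
    · exact hkj ▸ hk
    · exfalso
      have hxk : x ∈ (N.B k).support := SimpleGraph.Walk.fst_mem_support_of_mem_edges _ hk
      have hyk : y ∈ (N.B k).support := SimpleGraph.Walk.snd_mem_support_of_mem_edges _ hk
      have hne : j ≠ k := fun h => hkj h.symm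
      have hxv : x = N.b j ∨ x = N.a j := by
        rcases N.bead_disjoint j k hne x hx hxk with ⟨_, h2, _⟩ | ⟨_, _, h3⟩
        · exact Or.inl h2
        · exact Or.inr h3
      have hyv : y = N.b j ∨ y = N.a j := by
        rcases N.bead_disjoint j k hne y hy hyk with ⟨_, h2, _⟩ | ⟨_, _, h3⟩
        · exact Or.inl h2
        · exact Or.inr h3
      rcases hxv with h1 | h1 <;> rcases hyv with h2 | h2
      · exact hadj.ne (h1.trans h2.symm)
      · exact N.ab_nonadj j (by rw [← h1, ← h2]; exact hadj.symm)
      · exact N.ab_nonadj j (by rw [← h1, ← h2]; exact hadj)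
      · exact hadj.ne (h1.trans h2.symm)
  · exfalso
    have hxk : x ∈ (N.P k).support := SimpleGraph.Walk.fst_mem_support_of_mem_edges _ hk
    have hyk : y ∈ (N.P k).support := SimpleGraph.Walk.snd_mem_support_of_mem_edges _ hk
    have hxv := N.path_bead_disjoint k j x hxk hx
    have hyv := N.path_bead_disjoint k j y hyk hy
    have key : ∀ x' y', x' = N.b k → y' = N.a (k + 1) → x' ∈ (N.B j).support →
        y' ∈ (N.B j).support → x' ≠ y' → False := by
      intro x' y' hx' hy' hxB hyB hne
      by_cases hjk : j = k
      · subst hjk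
        have hyB' : N.a (j + 1) ∈ (N.B j).support := by rw [← hy']; exact hyB
        obtain ⟨h1, _⟩ := N.a_mem_other (j := j + 1) (k := j) (zmod_succ_ne' hm j) hyB'
        exact hne (by rw [hx', hy', h1])
      · have hxB' : N.b k ∈ (N.B j).support := by rw [← hx']; exact hxB
        obtain ⟨h1, h2⟩ := N.b_mem_other (j := k) (k := j) hjk hxB'
        exact hne (by rw [hx', hy', ← h2, ← h1])
    rcases hxv with h1 | h1 <;> rcases hyv with h2 | h2
    · exact hadj.ne (h1.trans h2.symm)
    · exact key x y h1 h2 hx hy hadj.ne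
    · exact key y x h2 h1 hy hx hadj.ne.symm
    · exact hadj.ne (h1.trans h2.symm)

/-- Connector paths are induced. -/
lemma Necklace.path_induced (hm : 2 ≤ m) {j : ZMod m} {x y : V}
    (hx : x ∈ (N.P j).support) (hy : y ∈ (N.P j).support) (hadj : G.Adj x y) :
    s(x, y) ∈ (N.P j).edges := by
  rcases N.cover_edge x y hadj with ⟨k, hk⟩ | ⟨k, hk⟩
  · exfalso
    have hxk : x ∈ (N.B k).support := SimpleGraph.Walk.fst_mem_support_of_mem_edges _ hk
    have hyk : y ∈ (N.B k).support := SimpleGraph.Walk.snd_mem_support_of_mem_edges _ hk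
    have hxv := N.path_bead_disjoint j k x hx hxk
    have hyv := N.path_bead_disjoint j k y hy hyk
    have key : ∀ x' y', x' = N.b j → y' = N.a (j + 1) → x' ∈ (N.B k).support →
        y' ∈ (N.B k).support → x' ≠ y' → False := by
      intro x' y' hx' hy' hxB hyB hne
      by_cases hjk : k = j
      · subst hjk
        have hyB' : N.a (k + 1) ∈ (N.B k).support := by rw [← hy']; exact hyB
        obtain ⟨h1, _⟩ := N.a_mem_other (j := k + 1) (k := k) (zmod_succ_ne' hm k) hyB'
        exact hne (by rw [hx', hy', h1])
      · have hxB' : N.b j ∈ (N.B k).support := by rw [← hx']; exact hxB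
        obtain ⟨h1, h2⟩ := N.b_mem_other (fun h => hjk h) hxB'
        exact hne (by rw [hx', hy', h1, h2])
    rcases hxv with h1 | h1 <;> rcases hyv with h2 | h2
    · exact hadj.ne (h1.trans h2.symm)
    · exact key x y h1 h2 hxk hyk hadj.ne
    · exact key y x h2 h1 hyk hxk hadj.ne.symm
    · exact hadj.ne (h1.trans h2.symm)
  · by_cases hkj : k = j
    · exact hkj ▸ hk
    · exfalso
      have hxk : x ∈ (N.P k).support := SimpleGraph.Walk.fst_mem_support_of_mem_edges _ hk
      have hyk : y ∈ (N.P k).support := SimpleGraph.Walk.snd_mem_support_of_mem_edges _ hk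
      have hne : j ≠ k := fun h => hkj h.symm
      have hxv := (N.path_disjoint j k hne x hx hxk).1
      have hyv := (N.path_disjoint j k hne y hy hyk).1
      rcases hxv with h1 | h1 <;> rcases hyv with h2 | h2
      · exact hadj.ne (h1.trans h2.symm)
      · exact hkj (N.b_mem_path (by rw [← h1]; exact hxk))
      · exact hkj (N.b_mem_path (by rw [← h2]; exact hyk))
      · exact hadj.ne (h1.trans h2.symm)

end Toolkit

lemma exists_mem_ne3 [DecidableEq V] {l : List V} (hnd : l.Nodup) (hlen : 4 ≤ l.length)
    (a b c : V) : ∃ x ∈ l, x ≠ a ∧ x ≠ b ∧ x ≠ c := by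
  by_contra h
  push_neg at h
  have hsub : l.toFinset ⊆ {a, b, c} := by
    intro x hx
    rw [List.mem_toFinset] at hx
    by_cases h1 : x = a
    · simp [h1]
    by_cases h2 : x = b
    · simp [h2]
    simp [h x hx h1 h2]
  have hcard := Finset.card_le_card hsub
  rw [List.toFinset_card_of_nodup hnd] at hcard
  have : ({a, b, c} : Finset V).card ≤ 3 := by
    apply le_trans (Finset.card_insert_le _ _)
    apply Nat.succ_le_succ
    apply le_trans (Finset.card_insert_le _ _)
    simp
  omega

section Forward

variable {m : ℕ} (N : Necklace G m)

/-- A bead containing a vertex avoiding three given values. -/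
lemma Necklace.exists_bead_vertex (i : ZMod m) (t₁ t₂ t₃ : V) :
    ∃ x ∈ (N.B i).support, x ≠ t₁ ∧ x ≠ t₂ ∧ x ≠ t₃ := by
  classical
  have hnd : (N.B i).support.tail.Nodup := (N.B_cycle i).support_nodup
  have hlen : 4 ≤ (N.B i).support.tail.length := by
    have h1 := SimpleGraph.Walk.length_support (N.B i)
    have h2 := N.B_len i
    have h3 : (N.B i).support.tail.length = (N.B i).support.length - 1 :=
      List.length_tail
    omega
  obtain ⟨x, hx, h1, h2, h3⟩ := exists_mem_ne3 hnd hlen t₁ t₂ t₃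
  exact ⟨x, List.mem_of_mem_tail hx, h1, h2, h3⟩

lemma short_hasStarCutset (hm : 2 ≤ m) {i : ZMod m} (hshort : N.Short i) :
    HasStarCutset G := by
  classical
  obtain ⟨w, hwa, hwb⟩ := hshort
  set S : Set V := {N.a i, N.b i, w} with hSdef
  refine ⟨w, S, by simp [hSdef], ?_, ?_⟩
  · intro u hu
    rcases hu with h | h | h
    · exact Or.inr (h ▸ hwa.symm)
    · exact Or.inr (h ▸ hwb.symm)
    · exact Or.inl h
  · intro hpc
    -- pick x in bead i avoiding a i, b i, w
    obtain ⟨x, hxB, hx1, hx2, hx3⟩ := N.exists_bead_vertex i (N.a i) (N.b i) w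
    have hxS : x ∉ S := by simp [hSdef, hx1, hx2, hx3]
    -- pick y in bead i+1 avoiding a (i+1), b (i+1), w
    obtain ⟨y, hyB, hy1, hy2, hy3⟩ := N.exists_bead_vertex (i + 1) (N.a (i + 1))
      (N.b (i + 1)) w
    have hsucc : i + 1 ≠ i := zmod_succ_ne hm i
    have hyS : y ∉ S := by
      simp only [hSdef, Set.mem_insert_iff, Set.mem_singleton_iff]
      push_neg
      refine ⟨?_, ?_, hy3⟩
      · rintro rfl
        obtain ⟨h1, _⟩ := N.a_mem_other (j := i) (k := i + 1) hsucc hyB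
        exact hy2 h1
      · rintro rfl
        obtain ⟨h1, _⟩ := N.b_mem_other (j := i) (k := i + 1) hsucc hyB
        exact hy1 h1
    have hyBi : y ∉ (N.B i).support := by
      intro hyBi
      rcases N.bead_disjoint (i + 1) i hsucc y hyB hyBi with ⟨_, h2, _⟩ | ⟨_, _, h3⟩
      · exact hy2 h2
      · exact hy1 h3
    -- confinement
    have hclosed : ∀ u z : V, u ∈ (N.B i).support → u ∉ S → z ∉ S → G.Adj u z →
        z ∈ (N.B i).support := by
      intro u z hu huS hzS hadj
      have huai : u ≠ N.a i := by intro h; exact huS (by simp [hSdef, h])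
      have hubi : u ≠ N.b i := by intro h; exact huS (by simp [hSdef, h])
      rcases N.cover_edge u z hadj with ⟨k, hk⟩ | ⟨k, hk⟩
      · by_cases hki : k = i
        · subst hki
          exact SimpleGraph.Walk.snd_mem_support_of_mem_edges _ hk
        · exfalso
          have huk : u ∈ (N.B k).support := SimpleGraph.Walk.fst_mem_support_of_mem_edges _ hk
          rcases N.bead_disjoint i k (fun h => hki h.symm) u hu huk with
            ⟨_, h2, _⟩ | ⟨_, _, h3⟩
          · exact hubi h2
          · exact huai h3
      · exfalso
        have huk : u ∈ (N.P k).support := SimpleGraph.Walk.fst_mem_support_of_mem_edges _ hk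
        rcases N.path_bead_disjoint k i u huk hu with h1 | h1
        · by_cases hki : k = i
          · exact hubi (hki ▸ h1)
          · have : N.b k ∈ (N.B i).support := by rw [← h1]; exact hu
            obtain ⟨h2, _⟩ := N.b_mem_other (j := k) (k := i) (fun h => hki h.symm) this
            exact huai (h1.trans h2)
        · by_cases hki : k + 1 = i
          · exact huai (hki ▸ h1)
          · have : N.a (k + 1) ∈ (N.B i).support := by rw [← h1]; exact hu
            obtain ⟨h2, _⟩ := N.a_mem_other (j := k + 1) (k := i) (fun h => hki h.symm) this
            exact hubi (h1.trans h2)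
    have hreach := hpc ⟨x, hxS⟩ ⟨y, hyS⟩
    obtain ⟨p⟩ := hreach
    exact hyBi (induce_walk_confined hclosed p hxB)

end Forward

section Backward

variable {m : ℕ} (N : Necklace G m)

/-! ZMod index helpers -/

lemma zmod_cast_ne_zero (hm : 2 ≤ m) {r : ℕ} (h0 : 0 < r) (hr : r < m) : (r : ZMod m) ≠ 0 := by
  intro h
  have := (ZMod.natCast_eq_zero_iff r m).mp h
  have := Nat.le_of_dvd h0 this
  omega

lemma zmod_val_coe (hm : 2 ≤ m) (x : ZMod m) : ((x.val : ZMod m)) = x := by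
  haveI : NeZero m := ⟨by omega⟩
  exact ZMod.natCast_rightInverse x

lemma zmod_val_lt (hm : 2 ≤ m) (x : ZMod m) : x.val < m := by
  haveI : NeZero m := ⟨by omega⟩
  exact ZMod.val_lt x

lemma zmod_cast_sub_two (hm : 2 ≤ m) : ((m - 2 : ℕ) : ZMod m) = -2 := by
  have h : ((m : ℕ) : ZMod m) = 0 := ZMod.natCast_self m
  have : ((m - 2 : ℕ) : ZMod m) = ((m : ℕ) : ZMod m) - 2 := by
    rw [Nat.cast_sub hm]; norm_num
  rw [this, h]; ring

lemma zmod_cast_sub_one (hm : 2 ≤ m) : ((m - 1 : ℕ) : ZMod m) = -1 := by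
  have h : ((m : ℕ) : ZMod m) = 0 := ZMod.natCast_self m
  have : ((m - 1 : ℕ) : ZMod m) = ((m : ℕ) : ZMod m) - 1 := by
    rw [Nat.cast_sub (by omega)]; norm_num
  rw [this, h]; ring

/-- If `x ≠ -1` then `x.val ≤ m - 2`. -/
lemma zmod_val_le_of_ne_neg_one (hm : 2 ≤ m) {x : ZMod m} (hx : x ≠ -1) : x.val ≤ m - 2 := by
  have h1 := zmod_val_lt hm x
  by_contra h
  have h2 : x.val = m - 1 := by omega
  have := zmod_val_coe hm x
  rw [h2, zmod_cast_sub_one hm] at this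
  exact hx this.symm

lemma zmod_val_lt_of_ne (hm : 2 ≤ m) {x : ZMod m} (hx1 : x ≠ -1) (hx2 : x ≠ -2) :
    x.val < m - 2 := by
  have h1 := zmod_val_le_of_ne_neg_one hm hx1
  rcases Nat.lt_or_ge x.val (m - 2) with h | h
  · exact h
  have h2 : x.val = m - 2 := by omega
  have := zmod_val_coe hm x
  rw [h2, zmod_cast_sub_two hm] at this
  exact absurd this.symm hx2

section Conn

variable (hm : 2 ≤ m) {v : V} {S : Set V} (hvS : v ∈ S)
  (hstar : ∀ u ∈ S, u = v ∨ G.Adj v u)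

include hm hvS hstar

/-- Any two survivors of a bead are connected avoiding `S`. -/
lemma bead_conn (hshort : ∀ i, ¬ N.Short i) :
    ∀ (j : ZMod m) x, x ∈ (N.B j).support → x ∉ S →
      ∀ y, y ∈ (N.B j).support → y ∉ S → AReach G S x y := by
  classical
  intro j x hx hxS y hy hyS
  by_cases hv : v ∈ (N.B j).support
  · refine cycle_conn (N.B_cycle j) (Or.inr ⟨v, hvS, hv, ?_⟩) x hx hxS y hy hyS
    intro z hz hzS
    rcases hstar z hzS with h | h
    · exact Or.inl h
    · exact Or.inr (N.bead_chordless hm hv hz h)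
  · -- S meets this bead only in its junctions
    have hjo : ∀ z ∈ (N.B j).support, z ∈ S → z = N.a j ∨ z = N.b j := by
      intro z hz hzS
      rcases hstar z hzS with h | h
      · exact absurd (h ▸ hz) hv
      · rcases N.cover_edge v z h with ⟨k, hk⟩ | ⟨k, hk⟩
        · have hvk : v ∈ (N.B k).support := SimpleGraph.Walk.fst_mem_support_of_mem_edges _ hk
          have hzk : z ∈ (N.B k).support := SimpleGraph.Walk.snd_mem_support_of_mem_edges _ hk
          have hkj : k ≠ j := fun h' => hv (h' ▸ hvk)
          rcases N.bead_disjoint j k (fun h' => hkj h'.symm) z hz hzk with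
            ⟨_, h2, _⟩ | ⟨_, _, h3⟩
          · exact Or.inr h2
          · exact Or.inl h3
        · have hzk : z ∈ (N.P k).support := SimpleGraph.Walk.snd_mem_support_of_mem_edges _ hk
          rcases N.path_bead_disjoint k j z hzk hz with h1 | h1
          · by_cases hkj : k = j
            · exact Or.inr (hkj ▸ h1)
            · have : N.b k ∈ (N.B j).support := by rw [← h1]; exact hz
              obtain ⟨h2, _⟩ := N.b_mem_other (j := k) (k := j) (fun h' => hkj h'.symm) this
              exact Or.inl (h1.trans h2)
          · by_cases hkj : k + 1 = j
            · exact Or.inl (hkj ▸ h1)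
            · have : N.a (k + 1) ∈ (N.B j).support := by rw [← h1]; exact hz
              obtain ⟨h2, _⟩ := N.a_mem_other (j := k + 1) (k := j) (fun h' => hkj h'.symm) this
              exact Or.inr (h1.trans h2)
    have hnotboth : ¬ (N.a j ∈ S ∧ N.b j ∈ S) := by
      rintro ⟨haS, hbS⟩
      have hva : v ≠ N.a j := fun h' => hv (h' ▸ N.a_mem j)
      have hvb : v ≠ N.b j := fun h' => hv (h' ▸ N.b_mem j)
      have hadj_a : G.Adj v (N.a j) := by
        rcases hstar _ haS with h' | h'
        · exact absurd h'.symm hva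
        · exact h'
      have hadj_b : G.Adj v (N.b j) := by
        rcases hstar _ hbS with h' | h'
        · exact absurd h'.symm hvb
        · exact h'
      exact hshort j ⟨v, hadj_a.symm, hadj_b.symm⟩
    by_cases haS : N.a j ∈ S
    · have hbS : N.b j ∉ S := fun h' => hnotboth ⟨haS, h'⟩
      refine cycle_conn (N.B_cycle j) (Or.inr ⟨N.a j, haS, N.a_mem j, ?_⟩) x hx hxS y hy hyS
      intro z hz hzS
      rcases hjo z hz hzS with h | h
      · exact Or.inl h
      · exact absurd (h ▸ hzS) hbS
    · by_cases hbS : N.b j ∈ S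
      · refine cycle_conn (N.B_cycle j) (Or.inr ⟨N.b j, hbS, N.b_mem j, ?_⟩) x hx hxS y hy hyS
        intro z hz hzS
        rcases hjo z hz hzS with h | h
        · exact absurd (h ▸ hzS) haS
        · exact Or.inl h
      · refine cycle_conn (N.B_cycle j) (Or.inl ?_) x hx hxS y hy hyS
        intro z hz hzS
        rcases hjo z hz hzS with h | h
        · exact haS (h ▸ hzS)
        · exact hbS (h ▸ hzS)

/-- If `v` is not on a connector path, `S` meets it only in its endpoints. -/
lemma path_Schar {j : ZMod m} (hvP : v ∉ (N.P j).support) :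
    ∀ z ∈ (N.P j).support, z ∈ S → z = N.b j ∨ z = N.a (j + 1) := by
  intro z hz hzS
  rcases hstar z hzS with h | h
  · exact absurd (h ▸ hz) hvP
  · rcases N.cover_edge v z h with ⟨k, hk⟩ | ⟨k, hk⟩
    · have hzk : z ∈ (N.B k).support := SimpleGraph.Walk.snd_mem_support_of_mem_edges _ hk
      exact N.path_bead_disjoint j k z hz hzk
    · have hvk : v ∈ (N.P k).support := SimpleGraph.Walk.fst_mem_support_of_mem_edges _ hk
      have hzk : z ∈ (N.P k).support := SimpleGraph.Walk.snd_mem_support_of_mem_edges _ hk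
      have hkj : j ≠ k := fun h' => hvP (h' ▸ hvk)
      exact (N.path_disjoint j k hkj z hz hzk).1

/-- A connector path not containing `v` and with both endpoints alive is `S`-free. -/
lemma path_link_good {j : ZMod m} (hvP : v ∉ (N.P j).support)
    (hb : N.b j ∉ S) (ha : N.a (j + 1) ∉ S) : AReach G S (N.b j) (N.a (j + 1)) := by
  refine ⟨N.P j, ?_⟩
  intro z hz hzS
  rcases path_Schar N hm hvS hstar hvP z hz hzS with h | h
  · exact hb (h ▸ hzS)
  · exact ha (h ▸ hzS)

omit hm hvS hstar in
/-- Degenerate path with equal endpoint values. -/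
lemma path_support_eq {u u' : V} {p : G.Walk u u'} (hp : p.IsPath) (h : u = u') :
    ∀ z ∈ p.support, z = u := by
  subst h
  rw [SimpleGraph.Walk.isPath_iff_eq_nil] at hp
  subst hp
  intro z hz
  simpa using hz

/-- If `v` is not on connector path `j` and some survivor is, then not both endpoints
of the path are in `S`. -/
lemma path_not_both_dead (hm2 : 2 ≤ m) {j : ZMod m} (hvP : v ∉ (N.P j).support)
    {x : V} (hx : x ∈ (N.P j).support) (hxS : x ∉ S)
    (hbS : N.b j ∈ S) (haS : N.a (j + 1) ∈ S) : False := by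
  have hvb : v ≠ N.b j := by
    intro h'; apply hvP; rw [h']; exact SimpleGraph.Walk.start_mem_support _
  have hva : v ≠ N.a (j + 1) := by
    intro h'; apply hvP; rw [h']; exact SimpleGraph.Walk.end_mem_support _
  have hadj_b : G.Adj v (N.b j) := by
    rcases hstar _ hbS with h' | h'
    · exact absurd h'.symm hvb
    · exact h'
  have hadj_a : G.Adj v (N.a (j + 1)) := by
    rcases hstar _ haS with h' | h'
    · exact absurd h'.symm hva
    · exact h'
  -- if b j = a (j+1), path is degenerate: x = b j ∈ S, contra
  have hdeg : N.b j = N.a (j + 1) → False := by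
    intro hd
    have := path_support_eq (N.P_path j) hd x hx
    exact hxS (this ▸ hbS)
  -- locate edge v -- b j : forces v ∈ B j
  have hvBj : v ∈ (N.B j).support := by
    rcases N.cover_edge v (N.b j) hadj_b with ⟨k, hk⟩ | ⟨k, hk⟩
    · have hvk : v ∈ (N.B k).support := SimpleGraph.Walk.fst_mem_support_of_mem_edges _ hk
      have hbk : N.b j ∈ (N.B k).support := SimpleGraph.Walk.snd_mem_support_of_mem_edges _ hk
      by_cases hkj : k = j
      · exact hkj ▸ hvk
      · obtain ⟨h1, h2⟩ := N.b_mem_other (j := j) (k := k) hkj hbk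
        rw [h2] at h1
        exact absurd (hdeg h1) id
    · have hvk : v ∈ (N.P k).support := SimpleGraph.Walk.fst_mem_support_of_mem_edges _ hk
      have hbk : N.b j ∈ (N.P k).support := SimpleGraph.Walk.snd_mem_support_of_mem_edges _ hk
      have := N.b_mem_path hbk
      exact absurd (this ▸ hvk) hvP
  -- locate edge v -- a (j+1) : forces v ∈ B (j+1)
  have hvBj1 : v ∈ (N.B (j + 1)).support := by
    rcases N.cover_edge v (N.a (j + 1)) hadj_a with ⟨k, hk⟩ | ⟨k, hk⟩
    · have hvk : v ∈ (N.B k).support := SimpleGraph.Walk.fst_mem_support_of_mem_edges _ hk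
      have hak : N.a (j + 1) ∈ (N.B k).support :=
        SimpleGraph.Walk.snd_mem_support_of_mem_edges _ hk
      by_cases hkj : k = j + 1
      · exact hkj ▸ hvk
      · obtain ⟨h1, h2⟩ := N.a_mem_other (j := j + 1) (k := k) hkj hak
        have hkj' : k = j := (add_right_cancel h2).symm
        rw [hkj'] at h1
        exact absurd (hdeg h1.symm) id
    · have hvk : v ∈ (N.P k).support := SimpleGraph.Walk.fst_mem_support_of_mem_edges _ hk
      have hak : N.a (j + 1) ∈ (N.P k).support :=
        SimpleGraph.Walk.snd_mem_support_of_mem_edges _ hk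
      have := N.a_mem_path hak
      exact absurd (this ▸ hvk) hvP
  rcases N.bead_disjoint j (j + 1) (zmod_succ_ne' hm2 j) v hvBj hvBj1 with
    ⟨_, h2, _⟩ | ⟨_, _, h3⟩
  · exact hvb h2
  · -- v = a j : contradiction with Adj (a j) (b j)
    exact N.ab_nonadj j (h3 ▸ hadj_b)

/-- Every survivor on a connector path reaches one of its endpoints. -/
lemma path_reach (hm2 : 2 ≤ m) :
    ∀ (j : ZMod m) x, x ∈ (N.P j).support → x ∉ S →
      AReach G S x (N.b j) ∨ AReach G S x (N.a (j + 1)) := by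
  classical
  intro j x hx hxS
  by_cases hv : v ∈ (N.P j).support
  · refine path_reach_ends (N.P_path j) hvS hv ?_ x hx hxS
    intro z hz hzS
    rcases hstar z hzS with h | h
    · exact Or.inl h
    · exact Or.inr (N.path_induced hm2 hv hz h)
  · by_cases hbS : N.b j ∈ S
    · by_cases haS : N.a (j + 1) ∈ S
      · exact absurd (path_not_both_dead N hm hvS hstar hm2 hv hx hxS hbS haS) id
      · refine Or.inr (path_reach_end_of_start (N.P_path j) ?_ x hx hxS)
        intro z hz hzS
        rcases path_Schar N hm hvS hstar hv z hz hzS with h | h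
        · exact h
        · exact absurd (h ▸ hzS) haS
    · by_cases haS : N.a (j + 1) ∈ S
      · refine Or.inl (path_reach_start_of_end (N.P_path j) ?_ x hx hxS)
        intro z hz hzS
        rcases path_Schar N hm hvS hstar hv z hz hzS with h | h
        · exact absurd (h ▸ hzS) hbS
        · exact h
      · refine Or.inr ?_
        refine walk_avoid_reach (p := N.P j) ?_ x hx
        intro z hz hzS
        rcases path_Schar N hm hvS hstar hv z hz hzS with h | h
        · exact hbS (h ▸ hzS)
        · exact haS (h ▸ hzS)

omit hvS hstar in
/-- Chain lemma: compose good bead- and path-links around the necklace. -/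
lemma chain2 (k : ZMod m) (ha : N.a k ∉ S) (n : ℕ)
    (hbead : ∀ t : ℕ, t < n → AReach G S (N.a (k + t)) (N.b (k + t)))
    (hpath : ∀ t : ℕ, t < n → AReach G S (N.b (k + t)) (N.a (k + t + 1))) :
    (∀ t : ℕ, t ≤ n → AReach G S (N.a k) (N.a (k + t))) ∧
    (∀ t : ℕ, t < n → AReach G S (N.a k) (N.b (k + t))) := by
  have hA : ∀ t : ℕ, t ≤ n → AReach G S (N.a k) (N.a (k + t)) := by
    intro t
    induction t with
    | zero =>
      intro _
      have : (k + ((0 : ℕ) : ZMod m)) = k := by push_cast; ring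
      rw [this]
      exact AReach.refl ha
    | succ t ih =>
      intro ht
      have ht' : t ≤ n := by omega
      have htn : t < n := by omega
      have h1 := (ih ht').trans (hbead t htn)
      have h2 := h1.trans (hpath t htn)
      have : (k + ((t + 1 : ℕ) : ZMod m)) = k + (t : ZMod m) + 1 := by push_cast; ring
      rw [this]
      exact h2
  refine ⟨hA, ?_⟩
  intro t ht
  exact (hA t (le_of_lt ht)).trans (hbead t ht)

/-- Every survivor reaches `τ`, provided every alive junction does. -/
lemma survivor_step (hshort : ∀ i, ¬ N.Short i) (τ : V)
    (hjr : ∀ u, u ∉ S → (∃ j, u = N.a j ∨ u = N.b j) → AReach G S u τ) :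
    ∀ x, x ∉ S → AReach G S x τ := by
  intro x hx
  rcases N.cover_vertex x with ⟨j, hB⟩ | ⟨j, hP⟩
  · by_cases haS : N.a j ∈ S
    · have hbS : N.b j ∉ S := by
        intro hbS
        -- both junctions dead: impossible
        by_cases hva : v = N.a j
        · rcases hstar _ hbS with h' | h'
          · exact N.ab_ne j (hva.symm.trans h'.symm) |>.elim
          · exact N.ab_nonadj j (hva ▸ h')
        · by_cases hvb : v = N.b j
          · rcases hstar _ haS with h' | h'
            · exact N.ab_ne j (h'.trans hvb)
            · rw [hvb] at h'
              exact N.ab_nonadj j h'.symm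
          · have h1 : G.Adj v (N.a j) := by
              rcases hstar _ haS with h' | h'
              · exact absurd h'.symm hva
              · exact h'
            have h2 : G.Adj v (N.b j) := by
              rcases hstar _ hbS with h' | h'
              · exact absurd h'.symm hvb
              · exact h'
            exact hshort j ⟨v, h1.symm, h2.symm⟩
      have hr := bead_conn N hm hvS hstar hshort j x hB hx (N.b j) (N.b_mem j) hbS
      exact hr.trans (hjr _ hbS ⟨j, Or.inr rfl⟩)
    · have hr := bead_conn N hm hvS hstar hshort j x hB hx (N.a j) (N.a_mem j) haS
      exact hr.trans (hjr _ haS ⟨j, Or.inl rfl⟩)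
  · rcases path_reach N hm hvS hstar hm j x hP hx with h | h
    · exact h.trans (hjr _ h.right_not ⟨j, Or.inr rfl⟩)
    · exact h.trans (hjr _ h.right_not ⟨j + 1, Or.inl rfl⟩)

/-- Master lemma, version 1: profile where the dead junction values are `a e` and possibly
`b (e-1)`, and `v` can only be on connector path `e-1`. -/
lemma master1 (hshort : ∀ i, ¬ N.Short i) (e : ZMod m)
    (E1 : ∀ j, N.a j ∈ S → j = e)
    (E2 : ∀ j, N.b j ∈ S → j = e - 1)
    (E3 : ∀ j, v ∈ (N.P j).support → j = e - 1) :
    ∃ τ, τ ∉ S ∧ ∀ u, u ∉ S → (∃ j, u = N.a j ∨ u = N.b j) → AReach G S u τ := by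
  classical
  have hone : (1 : ZMod m) ≠ 0 := zmod_one_ne_zero hm
  have hτS : N.a (e + 1) ∉ S := fun h => zmod_succ_ne hm e (E1 _ h)
  have hbeS : N.b e ∉ S := fun h => hone (by linear_combination (E2 e h))
  have hvPe : v ∉ (N.P e).support := fun h => hone (by linear_combination (E3 e h))
  have hae1 : N.a (e - 1) ∉ S := fun h => hone (by linear_combination - (E1 _ h))
  obtain ⟨achain, bchain⟩ := chain2 N hm (e + 1) hτS (m - 2)
    (fun t ht => by
      refine bead_conn N hm hvS hstar hshort _ _ (N.a_mem _) ?_ _ (N.b_mem _) ?_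
      · intro h
        exact zmod_cast_ne_zero hm (Nat.succ_pos t) (by omega)
          (by push_cast; linear_combination (E1 _ h))
      · intro h
        exact zmod_cast_ne_zero hm (by omega : 0 < t + 2) (by omega)
          (by push_cast; linear_combination (E2 _ h)))
    (fun t ht => by
      refine path_link_good N hm hvS hstar ?_ ?_ ?_
      · intro h
        exact zmod_cast_ne_zero hm (by omega : 0 < t + 2) (by omega)
          (by push_cast; linear_combination (E3 _ h))
      · intro h
        exact zmod_cast_ne_zero hm (by omega : 0 < t + 2) (by omega)
          (by push_cast; linear_combination (E2 _ h))
      · intro h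
        exact zmod_cast_ne_zero hm (by omega : 0 < t + 2) (by omega)
          (by push_cast; linear_combination (E1 _ h)))
  have hlinkPe : AReach G S (N.b e) (N.a (e + 1)) :=
    path_link_good N hm hvS hstar hvPe hbeS hτS
  have hA : ∀ j : ZMod m, N.a j ∉ S → AReach G S (N.a j) (N.a (e + 1)) := by
    intro j hj
    by_cases hje : j = e
    · subst hje
      exact (bead_conn N hm hvS hstar hshort j _ (N.a_mem j) hj _ (N.b_mem j) hbeS).trans
        hlinkPe
    · set t := (j - (e + 1)).val with htdef
      have htle : t ≤ m - 2 := by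
        refine zmod_val_le_of_ne_neg_one hm ?_
        intro h
        exact hje (by linear_combination h)
      have hcast : (e + 1) + ((t : ℕ) : ZMod m) = j := by
        rw [htdef, zmod_val_coe hm]
        ring
      have := achain t htle
      rw [hcast] at this
      exact this.symm
  have hB : ∀ j : ZMod m, N.b j ∉ S → AReach G S (N.b j) (N.a (e + 1)) := by
    intro j hj
    by_cases hje : j = e
    · subst hje; exact hlinkPe
    · by_cases hje1 : j = e - 1
      · subst hje1
        exact (bead_conn N hm hvS hstar hshort _ _ (N.b_mem _) hj _ (N.a_mem _) hae1).trans
          (hA _ hae1)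
      · set t := (j - (e + 1)).val with htdef
        have htlt : t < m - 2 := by
          refine zmod_val_lt_of_ne hm ?_ ?_
          · intro h; exact hje (by linear_combination h)
          · intro h; exact hje1 (by linear_combination h)
        have hcast : (e + 1) + ((t : ℕ) : ZMod m) = j := by
          rw [htdef, zmod_val_coe hm]
          ring
        have := bchain t htlt
        rw [hcast] at this
        exact this.symm
  refine ⟨N.a (e + 1), hτS, ?_⟩
  rintro u hu ⟨j, rfl | rfl⟩
  · exact hA j hu
  · exact hB j hu

/-- Master lemma, version 2: profile where the dead junction values are `b e` and possibly
`a (e+1)`, and `v` can only be on connector path `e`. -/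
lemma master2 (hshort : ∀ i, ¬ N.Short i) (e : ZMod m)
    (E1 : ∀ j, N.a j ∈ S → j = e + 1)
    (E2 : ∀ j, N.b j ∈ S → j = e)
    (E3 : ∀ j, v ∈ (N.P j).support → j = e) :
    ∃ τ, τ ∉ S ∧ ∀ u, u ∉ S → (∃ j, u = N.a j ∨ u = N.b j) → AReach G S u τ := by
  classical
  have hone : (1 : ZMod m) ≠ 0 := zmod_one_ne_zero hm
  have hτS : N.a (e + 2) ∉ S := fun h => hone (by linear_combination (E1 _ h))
  have haeS : N.a e ∉ S := fun h => hone (by linear_combination - (E1 _ h))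
  have hbe1S : N.b (e + 1) ∉ S := fun h => hone (by linear_combination (E2 _ h))
  have hvPe1 : v ∉ (N.P (e + 1)).support := fun h => hone (by linear_combination (E3 _ h))
  obtain ⟨achain, bchain⟩ := chain2 N hm (e + 2) hτS (m - 2)
    (fun t ht => by
      refine bead_conn N hm hvS hstar hshort _ _ (N.a_mem _) ?_ _ (N.b_mem _) ?_
      · intro h
        exact zmod_cast_ne_zero hm (Nat.succ_pos t) (by omega)
          (by push_cast; linear_combination (E1 _ h))
      · intro h
        exact zmod_cast_ne_zero hm (by omega : 0 < t + 2) (by omega)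
          (by push_cast; linear_combination (E2 _ h)))
    (fun t ht => by
      refine path_link_good N hm hvS hstar ?_ ?_ ?_
      · intro h
        exact zmod_cast_ne_zero hm (by omega : 0 < t + 2) (by omega)
          (by push_cast; linear_combination (E3 _ h))
      · intro h
        exact zmod_cast_ne_zero hm (by omega : 0 < t + 2) (by omega)
          (by push_cast; linear_combination (E2 _ h))
      · intro h
        exact zmod_cast_ne_zero hm (by omega : 0 < t + 2) (by omega)
          (by push_cast; linear_combination (E1 _ h)))
  have hlinkPe1 : AReach G S (N.b (e + 1)) (N.a (e + 2)) := by
    have := path_link_good N hm hvS hstar hvPe1 hbe1S (by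
      convert hτS using 2
      ring)
    convert this using 2
    ring
  have hA : ∀ j : ZMod m, N.a j ∉ S → AReach G S (N.a j) (N.a (e + 2)) := by
    intro j hj
    by_cases hje : j = e + 1
    · subst hje
      exact (bead_conn N hm hvS hstar hshort _ _ (N.a_mem _) hj _ (N.b_mem _) hbe1S).trans
        hlinkPe1
    · set t := (j - (e + 2)).val with htdef
      have htle : t ≤ m - 2 := by
        refine zmod_val_le_of_ne_neg_one hm ?_
        intro h
        exact hje (by linear_combination h)
      have hcast : (e + 2) + ((t : ℕ) : ZMod m) = j := by
        rw [htdef, zmod_val_coe hm]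
        ring
      have := achain t htle
      rw [hcast] at this
      exact this.symm
  have hB : ∀ j : ZMod m, N.b j ∉ S → AReach G S (N.b j) (N.a (e + 2)) := by
    intro j hj
    by_cases hje1 : j = e + 1
    · subst hje1; exact hlinkPe1
    · by_cases hje : j = e
      · subst hje
        exact (bead_conn N hm hvS hstar hshort _ _ (N.b_mem _) hj _ (N.a_mem _) haeS).trans
          (hA _ haeS)
      · set t := (j - (e + 2)).val with htdef
        have htlt : t < m - 2 := by
          refine zmod_val_lt_of_ne hm ?_ ?_
          · intro h; exact hje1 (by linear_combination h)
          · intro h; exact hje (by linear_combination h)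
        have hcast : (e + 2) + ((t : ℕ) : ZMod m) = j := by
          rw [htdef, zmod_val_coe hm]
          ring
        have := bchain t htlt
        rw [hcast] at this
        exact this.symm
  refine ⟨N.a (e + 2), hτS, ?_⟩
  rintro u hu ⟨j, rfl | rfl⟩
  · exact hA j hu
  · exact hB j hu

/-- Not both junctions of a bead can be in the star `S`. -/
lemma junctions_not_both (hshort : ∀ i, ¬ N.Short i) (j : ZMod m)
    (haS : N.a j ∈ S) (hbS : N.b j ∈ S) : False := by
  by_cases hva : v = N.a j
  · rcases hstar _ hbS with h' | h'
    · exact N.ab_ne j (hva.symm.trans h'.symm) |>.elim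
    · exact N.ab_nonadj j (hva ▸ h')
  · by_cases hvb : v = N.b j
    · rcases hstar _ haS with h' | h'
      · exact N.ab_ne j (h'.trans hvb)
      · rw [hvb] at h'
        exact N.ab_nonadj j h'.symm
    · have h1 : G.Adj v (N.a j) := by
        rcases hstar _ haS with h' | h'
        · exact absurd h'.symm hva
        · exact h'
      have h2 : G.Adj v (N.b j) := by
        rcases hstar _ hbS with h' | h'
        · exact absurd h'.symm hvb
        · exact h'
      exact hshort j ⟨v, h1.symm, h2.symm⟩

/-- Case analysis A : `v = a e`. -/
lemma caseA (hshort : ∀ i, ¬ N.Short i) {e : ZMod m} (hva : v = N.a e) :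
    ∃ τ, τ ∉ S ∧ ∀ u, u ∉ S → (∃ j, u = N.a j ∨ u = N.b j) → AReach G S u τ := by
  have hE3 : ∀ j, v ∈ (N.P j).support → j = e - 1 := by
    intro j h
    have h' : N.a (e - 1 + 1) ∈ (N.P j).support := by
      have : e - 1 + 1 = e := by ring
      rw [this, ← hva]; exact h
    exact N.a_mem_path h'
  have hE1 : ∀ j, N.a j ∈ S → j = e := by
    intro j h
    rcases hstar _ h with h' | h'
    · exact N.a_inj (h'.trans hva)
    · rcases N.cover_edge v (N.a j) h' with ⟨k, hk⟩ | ⟨k, hk⟩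
      · have hvk : v ∈ (N.B k).support := SimpleGraph.Walk.fst_mem_support_of_mem_edges _ hk
        have hak : N.a j ∈ (N.B k).support := SimpleGraph.Walk.snd_mem_support_of_mem_edges _ hk
        by_cases hke : k = e
        · subst hke
          by_cases hje : j = k
          · exact hje
          · obtain ⟨h1, _⟩ := N.a_mem_other (j := j) (k := k) (fun hh => hje hh.symm) hak
            rw [hva, h1] at h'
            exact absurd h' (N.ab_nonadj k)
        · have hvk' : N.a e ∈ (N.B k).support := by rw [← hva]; exact hvk
          obtain ⟨h1, _⟩ := N.a_mem_other (j := e) (k := k) hke hvk'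
          by_cases hkj : k = j
          · subst hkj
            rw [hva, h1] at h'
            exact absurd h'.symm (N.ab_nonadj k)
          · obtain ⟨h3, _⟩ := N.a_mem_other (j := j) (k := k) hkj hak
            exact N.a_inj (h3.trans h1.symm)
      · have hvk : v ∈ (N.P k).support := SimpleGraph.Walk.fst_mem_support_of_mem_edges _ hk
        have hak : N.a j ∈ (N.P k).support := SimpleGraph.Walk.snd_mem_support_of_mem_edges _ hk
        have hke := hE3 k hvk
        have hak' : N.a (j - 1 + 1) ∈ (N.P k).support := by
          have : j - 1 + 1 = j := by ring
          rw [this]; exact hak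
        have := N.a_mem_path hak'
        rw [hke] at this
        linear_combination -this
  have hE2 : ∀ j, N.b j ∈ S → j = e - 1 := by
    intro j h
    rcases hstar _ h with h' | h'
    · have h2 := N.a_eq_b ((h'.trans hva).symm)
      linear_combination -h2
    · rcases N.cover_edge v (N.b j) h' with ⟨k, hk⟩ | ⟨k, hk⟩
      · have hvk : v ∈ (N.B k).support := SimpleGraph.Walk.fst_mem_support_of_mem_edges _ hk
        have hbk : N.b j ∈ (N.B k).support := SimpleGraph.Walk.snd_mem_support_of_mem_edges _ hk
        by_cases hke : k = e
        · subst hke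
          by_cases hje : j = k
          · subst hje
            rw [hva] at h'
            exact absurd h' (N.ab_nonadj j)
          · obtain ⟨h1, h2⟩ := N.b_mem_other (j := j) (k := k) (fun hh => hje hh.symm) hbk
            linear_combination -h2
        · have hvk' : N.a e ∈ (N.B k).support := by rw [← hva]; exact hvk
          obtain ⟨h1, h2⟩ := N.a_mem_other (j := e) (k := k) hke hvk'
          by_cases hkj : k = j
          · subst hkj
            exact absurd (by rw [hva, h1]) h'.ne
          · obtain ⟨h3, h4⟩ := N.b_mem_other (j := j) (k := k) hkj hbk
            rw [hva, h1, h3] at h'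
            exact absurd h'.symm (N.ab_nonadj k)
      · have hvk : v ∈ (N.P k).support := SimpleGraph.Walk.fst_mem_support_of_mem_edges _ hk
        have hbk : N.b j ∈ (N.P k).support := SimpleGraph.Walk.snd_mem_support_of_mem_edges _ hk
        have hke := hE3 k hvk
        have := N.b_mem_path hbk
        rw [← this, hke]
  exact master1 N hm hvS hstar hshort e hE1 hE2 hE3

/-- Case analysis B : `v = b e` and `v` is not any `a`-value. -/
lemma caseB (hshort : ∀ i, ¬ N.Short i) {e : ZMod m} (hvb : v = N.b e)
    (hnota : ∀ j, v ≠ N.a j) :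
    ∃ τ, τ ∉ S ∧ ∀ u, u ∉ S → (∃ j, u = N.a j ∨ u = N.b j) → AReach G S u τ := by
  have hE3 : ∀ j, v ∈ (N.P j).support → j = e := by
    intro j h
    exact N.b_mem_path (by rw [← hvb]; exact h)
  have hvBk : ∀ k, v ∈ (N.B k).support → k = e := by
    intro k h
    by_cases hke : k = e
    · exact hke
    · have h' : N.b e ∈ (N.B k).support := by rw [← hvb]; exact h
      obtain ⟨h1, _⟩ := N.b_mem_other (j := e) (k := k) hke h'
      exact absurd (hvb.trans h1) (hnota k)
  have hE2 : ∀ j, N.b j ∈ S → j = e := by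
    intro j h
    rcases hstar _ h with h' | h'
    · exact N.b_inj (h'.trans hvb)
    · rcases N.cover_edge v (N.b j) h' with ⟨k, hk⟩ | ⟨k, hk⟩
      · have hvk := hvBk k (SimpleGraph.Walk.fst_mem_support_of_mem_edges _ hk)
        have hbk : N.b j ∈ (N.B k).support := SimpleGraph.Walk.snd_mem_support_of_mem_edges _ hk
        by_cases hje : j = k
        · exact hje.trans hvk
        · obtain ⟨h1, _⟩ := N.b_mem_other (j := j) (k := k) (fun hh => hje hh.symm) hbk
          rw [hvb, ← hvk, h1] at h'
          exact absurd h'.symm (N.ab_nonadj k)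
      · have hvk : v ∈ (N.P k).support := SimpleGraph.Walk.fst_mem_support_of_mem_edges _ hk
        have hbk : N.b j ∈ (N.P k).support := SimpleGraph.Walk.snd_mem_support_of_mem_edges _ hk
        have hke := hE3 k hvk
        have := N.b_mem_path hbk
        rw [← this, hke]
  have hE1 : ∀ j, N.a j ∈ S → j = e + 1 := by
    intro j h
    rcases hstar _ h with h' | h'
    · exact absurd h'.symm (hnota j)
    · rcases N.cover_edge v (N.a j) h' with ⟨k, hk⟩ | ⟨k, hk⟩
      · have hvk := hvBk k (SimpleGraph.Walk.fst_mem_support_of_mem_edges _ hk)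
        have hak : N.a j ∈ (N.B k).support := SimpleGraph.Walk.snd_mem_support_of_mem_edges _ hk
        subst hvk
        by_cases hje : j = k
        · subst hje
          rw [hvb] at h'
          exact absurd h'.symm (N.ab_nonadj j)
        · obtain ⟨h1, h2⟩ := N.a_mem_other (j := j) (k := k) (fun hh => hje hh.symm) hak
          exact h2
      · have hvk : v ∈ (N.P k).support := SimpleGraph.Walk.fst_mem_support_of_mem_edges _ hk
        have hak : N.a j ∈ (N.P k).support := SimpleGraph.Walk.snd_mem_support_of_mem_edges _ hk
        have hke := hE3 k hvk
        have hak' : N.a (j - 1 + 1) ∈ (N.P k).support := by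
          have : j - 1 + 1 = j := by ring
          rw [this]; exact hak
        have := N.a_mem_path hak'
        rw [hke] at this
        linear_combination -this
  exact master2 N hm hvS hstar hshort e hE1 hE2 hE3

/-- Case analysis C : `v` on a bead but not a junction value. -/
lemma caseC (hshort : ∀ i, ¬ N.Short i) {e : ZMod m} (hvB : v ∈ (N.B e).support)
    (hnota : ∀ j, v ≠ N.a j) (hnotb : ∀ j, v ≠ N.b j) :
    ∃ τ, τ ∉ S ∧ ∀ u, u ∉ S → (∃ j, u = N.a j ∨ u = N.b j) → AReach G S u τ := by
  have hvP : ∀ j, v ∉ (N.P j).support := by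
    intro j h
    rcases N.path_bead_disjoint j e v h hvB with h1 | h1
    · exact hnotb j h1
    · exact hnota (j + 1) h1
  have hSsub : ∀ s ∈ S, s ∈ (N.B e).support := by
    intro s hs
    rcases hstar _ hs with h' | h'
    · exact h' ▸ hvB
    · rcases N.cover_edge v s h' with ⟨k, hk⟩ | ⟨k, hk⟩
      · have hvk : v ∈ (N.B k).support := SimpleGraph.Walk.fst_mem_support_of_mem_edges _ hk
        have hsk : s ∈ (N.B k).support := SimpleGraph.Walk.snd_mem_support_of_mem_edges _ hk
        by_cases hke : k = e
        · exact hke ▸ hsk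
        · rcases N.bead_disjoint e k (fun hh => hke hh.symm) v hvB hvk with
            ⟨_, h2, _⟩ | ⟨_, _, h3⟩
          · exact absurd h2 (hnotb e)
          · exact absurd h3 (hnota e)
      · have hvk : v ∈ (N.P k).support := SimpleGraph.Walk.fst_mem_support_of_mem_edges _ hk
        exact absurd hvk (hvP k)
  have dCa : ∀ j, N.a j ∈ S → j = e ∨ (j = e + 1 ∧ N.a j = N.b e) := by
    intro j h
    have := hSsub _ h
    by_cases hje : j = e
    · exact Or.inl hje
    · obtain ⟨h1, h2⟩ := N.a_mem_other (j := j) (k := e) (fun hh => hje hh.symm) this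
      exact Or.inr ⟨h2, h1⟩
  have dCb : ∀ j, N.b j ∈ S → j = e ∨ (j = e - 1 ∧ N.b j = N.a e) := by
    intro j h
    have := hSsub _ h
    by_cases hje : j = e
    · exact Or.inl hje
    · obtain ⟨h1, h2⟩ := N.b_mem_other (j := j) (k := e) (fun hh => hje hh.symm) this
      exact Or.inr ⟨by linear_combination -h2, h1⟩
  by_cases hbeS : N.b e ∈ S
  · have haeS : N.a e ∉ S := fun h => junctions_not_both N hm hvS hstar hshort e h hbeS
    refine master2 N hm hvS hstar hshort e ?_ ?_ (fun j h => absurd h (hvP j))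
    · intro j h
      rcases dCa j h with h1 | ⟨h1, _⟩
      · subst h1; exact absurd h haeS
      · exact h1
    · intro j h
      rcases dCb j h with h1 | ⟨_, h2⟩
      · exact h1
      · exact absurd (h2 ▸ h) haeS
  · refine master1 N hm hvS hstar hshort e ?_ ?_ (fun j h => absurd h (hvP j))
    · intro j h
      rcases dCa j h with h1 | ⟨_, h2⟩
      · exact h1
      · exact absurd (h2 ▸ h) hbeS
    · intro j h
      rcases dCb j h with h1 | ⟨h1, _⟩
      · subst h1; exact absurd h hbeS
      · exact h1

/-- Case analysis D : `v` is an interior vertex of a connector path. -/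
lemma caseD (hshort : ∀ i, ¬ N.Short i) {e : ZMod m} (hvP : v ∈ (N.P e).support)
    (hnotB : ∀ k, v ∉ (N.B k).support) :
    ∃ τ, τ ∉ S ∧ ∀ u, u ∉ S → (∃ j, u = N.a j ∨ u = N.b j) → AReach G S u τ := by
  have hE3 : ∀ j, v ∈ (N.P j).support → j = e := by
    intro j h
    by_cases hje : j = e
    · exact hje
    · rcases (N.path_disjoint j e (fun hh => hje hh) v h hvP).2 with h1 | h1
      · exact absurd (by rw [h1]; exact N.b_mem e) (hnotB e)
      · exact absurd (by rw [h1]; exact N.a_mem (e + 1)) (hnotB (e + 1))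
  have hE1 : ∀ j, N.a j ∈ S → j = e + 1 := by
    intro j h
    rcases hstar _ h with h' | h'
    · exact absurd (by rw [← h']; exact N.a_mem j) (hnotB j)
    · rcases N.cover_edge v (N.a j) h' with ⟨k, hk⟩ | ⟨k, hk⟩
      · exact absurd (SimpleGraph.Walk.fst_mem_support_of_mem_edges _ hk) (hnotB k)
      · have hvk : v ∈ (N.P k).support := SimpleGraph.Walk.fst_mem_support_of_mem_edges _ hk
        have hak : N.a j ∈ (N.P k).support := SimpleGraph.Walk.snd_mem_support_of_mem_edges _ hk
        have hke := hE3 k hvk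
        have hak' : N.a (j - 1 + 1) ∈ (N.P k).support := by
          have : j - 1 + 1 = j := by ring
          rw [this]; exact hak
        have := N.a_mem_path hak'
        rw [hke] at this
        linear_combination -this
  have hE2 : ∀ j, N.b j ∈ S → j = e := by
    intro j h
    rcases hstar _ h with h' | h'
    · exact absurd (by rw [← h']; exact N.b_mem j) (hnotB j)
    · rcases N.cover_edge v (N.b j) h' with ⟨k, hk⟩ | ⟨k, hk⟩
      · exact absurd (SimpleGraph.Walk.fst_mem_support_of_mem_edges _ hk) (hnotB k)
      · have hvk : v ∈ (N.P k).support := SimpleGraph.Walk.fst_mem_support_of_mem_edges _ hk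
        have hbk : N.b j ∈ (N.P k).support := SimpleGraph.Walk.snd_mem_support_of_mem_edges _ hk
        have hke := hE3 k hvk
        have := N.b_mem_path hbk
        rw [← this, hke]
  exact master2 N hm hvS hstar hshort e hE1 hE2 hE3

/-- Main connectivity: with no short bead, removing a star leaves everything connected. -/
lemma no_short_conn (hshort : ∀ i, ¬ N.Short i) :
    ∀ x, x ∉ S → ∀ y, y ∉ S → AReach G S x y := by
  have hmaster : ∃ τ, τ ∉ S ∧ ∀ u, u ∉ S → (∃ j, u = N.a j ∨ u = N.b j) →
      AReach G S u τ := by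
    by_cases hva : ∃ j, v = N.a j
    · obtain ⟨e, he⟩ := hva
      exact caseA N hm hvS hstar hshort he
    · push_neg at hva
      by_cases hvb : ∃ j, v = N.b j
      · obtain ⟨e, he⟩ := hvb
        exact caseB N hm hvS hstar hshort he hva
      · push_neg at hvb
        by_cases hvBead : ∃ k, v ∈ (N.B k).support
        · obtain ⟨e, he⟩ := hvBead
          exact caseC N hm hvS hstar hshort he hva hvb
        · push_neg at hvBead
          rcases N.cover_vertex v with ⟨e, he⟩ | ⟨e, he⟩
          · exact absurd he (hvBead e)
          · exact caseD N hm hvS hstar hshort he hvBead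
  obtain ⟨τ, hτ, hjr⟩ := hmaster
  have hstep := survivor_step N hm hvS hstar hshort τ hjr
  intro x hx y hy
  exact (hstep x hx).trans (hstep y hy).symm

end Conn

end Backward


/-- A necklace graph has a star cutset iff it has a short bead. -/
theorem necklace_starCutset_iff_shortBead (V : Type) (G : SimpleGraph V) (m : ℕ)
    (hm : 2 ≤ m) (N : Necklace G m) :
    HasStarCutset G ↔ ∃ i, N.Short i := by
  constructor
  · intro hcut
    by_contra hno
    push_neg at hno
    obtain ⟨v, S, hvS, hstar, hdisc⟩ := hcut
    apply hdisc
    intro xx yy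
    have hx : (xx : V) ∉ S := xx.2
    have hy : (yy : V) ∉ S := yy.2
    have h := no_short_conn N hm hvS hstar hno (xx : V) hx (yy : V) hy
    exact areach_induce_reachable h hx hy
  · rintro ⟨i, hs⟩
    exact short_hasStarCutset N hm hs

end BurlingFormal
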